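/- Let 0 < b < 1/2, let μ* be the symmetric branching measure on C with constant parameter b, and let T be the associated capacity. For n ∈ ℕ let X_n = {x ∈ 2^ℕ : x(n) = 0}. Then T(X₀) = 1 − b, T(X_{n+1}) = (2 − 2b)·T(X_n) − (1 − 2b)·T(X_n)² for all n, and lim_{n→∞} T(X_n) = 1. -/
import Mathlib


open Set MeasureTheory Topology Filter

/-- Cantor space `2^ℕ`. -/
abbrev Cantor : Type := ℕ → Bool

/-- The basic interval `I(σ)` of all extensions of the finite binary string `σ`. -/
def cyl (σ : List Bool) : Set Cantor :=
  {x | ∀ i : Fin σ.length, x i = σ.get i}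

/-- The space `C` of nonempty closed subsets of Cantor space. -/
abbrev CC : Type := {K : Set Cantor // K.Nonempty ∧ IsClosed K}

/-- The hit-or-miss topology on `C`, generated by the sets
`V(U) = {K : K ∩ U ≠ ∅}` and `W(U) = {K : K ⊆ U}` for `U` open. -/
instance (priority := 10000) hitMissTop : TopologicalSpace CC :=
  TopologicalSpace.generateFrom
    ({S | ∃ U : Set Cantor, IsOpen U ∧ S = {K : CC | (K.1 ∩ U).Nonempty}} ∪
     {S | ∃ U : Set Cantor, IsOpen U ∧ S = {K : CC | K.1 ⊆ U}})

/-- The Borel σ-algebra of the hit-or-miss topology. -/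
instance (priority := 10000) hitMissMeasurable : MeasurableSpace CC := borel CC

/-- `A` is a finite tree of height `n` without dead ends. -/
def FinTree (n : ℕ) (A : Finset (List Bool)) : Prop :=
  A.Nonempty ∧
  (∀ σ ∈ A, σ.length ≤ n) ∧
  (∀ σ τ : List Bool, σ <+: τ → τ ∈ A → σ ∈ A) ∧
  (∀ σ ∈ A, σ.length < n → σ ++ [false] ∈ A ∨ σ ++ [true] ∈ A)

/-- `U_A = {K ∈ C : T_K ∩ {0,1}^{≤ n} = A}`. -/
def UA (n : ℕ) (A : Finset (List Bool)) : Set CC :=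
  {K | ∀ σ : List Bool, σ.length ≤ n → (σ ∈ A ↔ (K.1 ∩ cyl σ).Nonempty)}

/-- The weight of a node `σ` of `A` in the symmetric branching process with parameter `β`. -/
noncomputable def symWeight (β : List Bool → ℝ) (A : Finset (List Bool)) (σ : List Bool) : ℝ :=
  if σ ++ [false] ∈ A ∧ σ ++ [true] ∈ A then 1 - 2 * β σ else β σ

/-- `μ` is the symmetric branching measure on `C` with parameter `β`. -/
def IsSymBranching (β : List Bool → ℝ) (μ : Measure CC) : Prop :=
  IsProbabilityMeasure μ ∧
  ∀ (n : ℕ) (A : Finset (List Bool)), FinTree n A →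
    (μ (UA n A)).toReal = ∏ σ ∈ A.filter (fun σ => σ.length < n), symWeight β A σ

/-- The weight of a node `σ` of `A` in the `(b₀,b₁)`-branching process. -/
noncomputable def asymWeight (b0 b1 : ℝ) (A : Finset (List Bool)) (σ : List Bool) : ℝ :=
  if σ ++ [false] ∈ A ∧ σ ++ [true] ∈ A then 1 - b0 - b1
  else if σ ++ [false] ∈ A then b0 else b1

/-- `μ` is the `(b₀,b₁)`-branching measure on `C`. -/
def IsBranching (b0 b1 : ℝ) (μ : Measure CC) : Prop :=
  IsProbabilityMeasure μ ∧
  ∀ (n : ℕ) (A : Finset (List Bool)), FinTree n A →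
    (μ (UA n A)).toReal = ∏ σ ∈ A.filter (fun σ => σ.length < n), asymWeight b0 b1 A σ

/-- The capacity `T(Q) = μ*({K ∈ C : K ∩ Q ≠ ∅})` associated to a measure on `C`. -/
noncomputable def cap (μ : Measure CC) (Q : Set Cantor) : ℝ :=
  (μ {K : CC | (K.1 ∩ Q).Nonempty}).toReal
section Aux

open scoped Classical

/-- Strings of length exactly `k`. -/
def Lk : ℕ → Finset (List Bool)
  | 0 => {[]}
  | k+1 => ((Lk k).image (List.cons false)) ∪ ((Lk k).image (List.cons true))

lemma mem_Lk : ∀ {k : ℕ} {σ : List Bool}, σ ∈ Lk k ↔ σ.length = k := by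
  intro k
  induction k with
  | zero => intro σ; simp [Lk, List.length_eq_zero_iff]
  | succ k ih =>
    intro σ
    cases σ with
    | nil => simp [Lk]
    | cons c σ =>
      cases c <;> simp [Lk, ih]

/-- Strings of length at most `m`. -/
def Strs (m : ℕ) : Finset (List Bool) := (Finset.range (m+1)).biUnion Lk

lemma mem_Strs {m : ℕ} {σ : List Bool} : σ ∈ Strs m ↔ σ.length ≤ m := by
  simp only [Strs, Finset.mem_biUnion, Finset.mem_range, mem_Lk]
  constructor
  · rintro ⟨k, hk, rfl⟩; omega
  · intro h; exact ⟨σ.length, by omega, rfl⟩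

/-- All finite trees of height `m` without dead ends. -/
noncomputable def Trees (m : ℕ) : Finset (Finset (List Bool)) :=
  (Strs m).powerset.filter (fun A => FinTree m A)

lemma mem_Trees {m : ℕ} {A : Finset (List Bool)} : A ∈ Trees m ↔ FinTree m A := by
  simp only [Trees, Finset.mem_filter, Finset.mem_powerset, and_iff_right_iff_imp]
  intro h σ hσ
  exact mem_Strs.2 (h.2.1 σ hσ)

lemma nil_mem_of_tree {m : ℕ} {A : Finset (List Bool)} (h : FinTree m A) : [] ∈ A := by
  obtain ⟨σ, hσ⟩ := h.1
  exact h.2.2.1 [] σ List.nil_prefix hσ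

end Aux
section Aux2

open scoped Classical

/-- The subtree of `A` below the child `c`. -/
noncomputable def child (c : Bool) (A : Finset (List Bool)) : Finset (List Bool) :=
  (A.image List.tail).filter (fun σ => c :: σ ∈ A)

lemma mem_child {c : Bool} {A : Finset (List Bool)} {σ : List Bool} :
    σ ∈ child c A ↔ (c :: σ) ∈ A := by
  simp only [child, Finset.mem_filter, Finset.mem_image]
  constructor
  · rintro ⟨-, h⟩; exact h
  · intro h; exact ⟨⟨c :: σ, h, rfl⟩, h⟩

/-- Glue two subtrees below a root. -/
def consTree (B₀ B₁ : Finset (List Bool)) : Finset (List Bool) :=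
  insert [] ((B₀.image (List.cons false)) ∪ (B₁.image (List.cons true)))

lemma mem_consTree {B₀ B₁ : Finset (List Bool)} {τ : List Bool} :
    τ ∈ consTree B₀ B₁ ↔ τ = [] ∨ (∃ σ ∈ B₀, τ = false :: σ) ∨ (∃ σ ∈ B₁, τ = true :: σ) := by
  simp only [consTree, Finset.mem_insert, Finset.mem_union, Finset.mem_image]
  constructor
  · rintro (rfl | ⟨σ, hσ, rfl⟩ | ⟨σ, hσ, rfl⟩)
    exacts [Or.inl rfl, Or.inr (Or.inl ⟨σ, hσ, rfl⟩), Or.inr (Or.inr ⟨σ, hσ, rfl⟩)]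
  · rintro (rfl | ⟨σ, hσ, rfl⟩ | ⟨σ, hσ, rfl⟩)
    exacts [Or.inl rfl, Or.inr (Or.inl ⟨σ, hσ, rfl⟩), Or.inr (Or.inr ⟨σ, hσ, rfl⟩)]

lemma child_consTree_false {B₀ B₁ : Finset (List Bool)} : child false (consTree B₀ B₁) = B₀ := by
  ext σ; simp [mem_child, mem_consTree]

lemma child_consTree_true {B₀ B₁ : Finset (List Bool)} : child true (consTree B₀ B₁) = B₁ := by
  ext σ; simp [mem_child, mem_consTree]

lemma consTree_child {A : Finset (List Bool)} (h : [] ∈ A) :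
    consTree (child false A) (child true A) = A := by
  ext τ
  rw [mem_consTree]
  constructor
  · rintro (rfl | ⟨σ, hσ, rfl⟩ | ⟨σ, hσ, rfl⟩)
    · exact h
    · exact mem_child.1 hσ
    · exact mem_child.1 hσ
  · intro hτ
    match τ with
    | [] => exact Or.inl rfl
    | false :: σ => exact Or.inr (Or.inl ⟨σ, mem_child.2 hτ, rfl⟩)
    | true :: σ => exact Or.inr (Or.inr ⟨σ, mem_child.2 hτ, rfl⟩)

lemma child_eq_empty {c : Bool} {A : Finset (List Bool)} (h : FinTree (m+1) A) (hc : [c] ∉ A) :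
    child c A = ∅ := by
  ext σ
  simp only [mem_child, Finset.notMem_empty, iff_false]
  intro hmem
  exact hc (h.2.2.1 [c] (c :: σ) ⟨σ, rfl⟩ hmem)

/-- The subtree below a present child is a tree of one smaller height. -/
lemma child_tree {c : Bool} {m : ℕ} {A : Finset (List Bool)} (h : FinTree (m+1) A)
    (hc : [c] ∈ A) : FinTree m (child c A) := by
  obtain ⟨-, hlen, hpref, hext⟩ := h
  refine ⟨⟨[], ?_⟩, ?_, ?_, ?_⟩
  · rw [mem_child]; exact hc
  · intro σ hσ
    have := hlen (c :: σ) (mem_child.1 hσ)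
    simp at this; omega
  · intro σ τ hst hτ
    rw [mem_child] at *
    exact hpref (c :: σ) (c :: τ) (by
      obtain ⟨u, rfl⟩ := hst; exact ⟨u, rfl⟩) hτ
  · intro σ hσ hσm
    rw [mem_child] at hσ
    have := hext (c :: σ) hσ (by simpa using Nat.succ_lt_succ hσm)
    rcases this with h' | h'
    · exact Or.inl (mem_child.2 h')
    · exact Or.inr (mem_child.2 h')

lemma consTree_tree {m : ℕ} {B₀ B₁ : Finset (List Bool)}
    (h₀ : B₀ = ∅ ∨ FinTree m B₀) (h₁ : B₁ = ∅ ∨ FinTree m B₁)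
    (hne : ¬(B₀ = ∅ ∧ B₁ = ∅)) : FinTree (m+1) (consTree B₀ B₁) := by
  have hB₀ : ∀ σ ∈ B₀, FinTree m B₀ := by
    intro σ hσ; rcases h₀ with h | h
    · simp [h] at hσ
    · exact h
  have hB₁ : ∀ σ ∈ B₁, FinTree m B₁ := by
    intro σ hσ; rcases h₁ with h | h
    · simp [h] at hσ
    · exact h
  refine ⟨⟨[], by simp [mem_consTree]⟩, ?_, ?_, ?_⟩
  · intro σ hσ
    rcases mem_consTree.1 hσ with rfl | ⟨σ', h', rfl⟩ | ⟨σ', h', rfl⟩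
    · simp
    · simpa using (hB₀ σ' h').2.1 σ' h'
    · simpa using (hB₁ σ' h').2.1 σ' h'
  · intro σ τ hst hτ
    rcases mem_consTree.1 hτ with rfl | ⟨τ', h', rfl⟩ | ⟨τ', h', rfl⟩
    · rw [List.prefix_nil.1 hst]; simp [mem_consTree]
    · match σ, hst with
      | [], _ => simp [mem_consTree]
      | x :: σ', hst =>
        obtain ⟨u, hu⟩ := hst
        simp at hu
        obtain ⟨rfl, hu⟩ := hu
        exact mem_consTree.2 (Or.inr (Or.inl ⟨σ', (hB₀ τ' h').2.2.1 σ' τ' ⟨u, hu⟩ h', rfl⟩))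
    · match σ, hst with
      | [], _ => simp [mem_consTree]
      | x :: σ', hst =>
        obtain ⟨u, hu⟩ := hst
        simp at hu
        obtain ⟨rfl, hu⟩ := hu
        exact mem_consTree.2 (Or.inr (Or.inr ⟨σ', (hB₁ τ' h').2.2.1 σ' τ' ⟨u, hu⟩ h', rfl⟩))
  · intro σ hσ hlen
    rcases mem_consTree.1 hσ with rfl | ⟨σ', h', rfl⟩ | ⟨σ', h', rfl⟩
    · -- extend the root into whichever subtree is nonempty
      rcases h₀ with h | h
      · rcases h₁ with h1 | h1
        · exact absurd ⟨h, h1⟩ hne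
        · obtain ⟨τ, hτ⟩ := h1.1
          have : [] ∈ B₁ := h1.2.2.1 [] τ List.nil_prefix hτ
          exact Or.inr (mem_consTree.2 (Or.inr (Or.inr ⟨[], this, rfl⟩)))
      · obtain ⟨τ, hτ⟩ := h.1
        have : [] ∈ B₀ := h.2.2.1 [] τ List.nil_prefix hτ
        exact Or.inl (mem_consTree.2 (Or.inr (Or.inl ⟨[], this, rfl⟩)))
    · have hlen' : σ'.length < m := by simpa using hlen
      rcases (hB₀ σ' h').2.2.2 σ' h' hlen' with h'' | h''
      · exact Or.inl (mem_consTree.2 (Or.inr (Or.inl ⟨σ' ++ [false], h'', rfl⟩)))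
      · exact Or.inr (mem_consTree.2 (Or.inr (Or.inl ⟨σ' ++ [true], h'', rfl⟩)))
    · have hlen' : σ'.length < m := by simpa using hlen
      rcases (hB₁ σ' h').2.2.2 σ' h' hlen' with h'' | h''
      · exact Or.inl (mem_consTree.2 (Or.inr (Or.inr ⟨σ' ++ [false], h'', rfl⟩)))
      · exact Or.inr (mem_consTree.2 (Or.inr (Or.inr ⟨σ' ++ [true], h'', rfl⟩)))

end Aux2
section Aux3

open scoped Classical

/-- The total weight of a tree. -/
noncomputable def W (b : ℝ) (m : ℕ) (A : Finset (List Bool)) : ℝ :=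
  ∏ σ ∈ A.filter (fun σ => σ.length < m), symWeight (fun _ => b) A σ

lemma W_empty (b : ℝ) (m : ℕ) : W b m ∅ = 1 := by simp [W]

lemma symWeight_child {b : ℝ} {c : Bool} {A : Finset (List Bool)} {σ : List Bool} :
    symWeight (fun _ => b) A (c :: σ) = symWeight (fun _ => b) (child c A) σ := by
  simp only [symWeight, mem_child, List.cons_append]

lemma filter_decomp {m : ℕ} {A : Finset (List Bool)} (h : [] ∈ A) :
    A.filter (fun σ => σ.length < m + 1) =
      insert []
        ((((child false A).filter (fun σ => σ.length < m)).image (List.cons false)) ∪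
         (((child true A).filter (fun σ => σ.length < m)).image (List.cons true))) := by
  ext τ
  simp only [Finset.mem_filter, Finset.mem_insert, Finset.mem_union, Finset.mem_image,
    mem_child]
  match τ with
  | [] => simp [h]
  | false :: σ =>
    simp only [List.length_cons]
    constructor
    · rintro ⟨h1, h2⟩
      exact Or.inr (Or.inl ⟨σ, ⟨h1, by omega⟩, rfl⟩)
    · rintro (h' | ⟨σ', ⟨h1, h2⟩, h3⟩ | ⟨σ', ⟨h1, h2⟩, h3⟩)
      · exact absurd h' (by simp)
      · simp only [List.cons.injEq] at h3
        obtain ⟨-, rfl⟩ := h3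
        exact ⟨h1, by omega⟩
      · simp at h3
  | true :: σ =>
    simp only [List.length_cons]
    constructor
    · rintro ⟨h1, h2⟩
      exact Or.inr (Or.inr ⟨σ, ⟨h1, by omega⟩, rfl⟩)
    · rintro (h' | ⟨σ', ⟨h1, h2⟩, h3⟩ | ⟨σ', ⟨h1, h2⟩, h3⟩)
      · exact absurd h' (by simp)
      · simp at h3
      · simp only [List.cons.injEq] at h3
        obtain ⟨-, rfl⟩ := h3
        exact ⟨h1, by omega⟩

/-- Factorization of the weight of a tree into the root weight and subtree weights. -/
lemma W_decomp {b : ℝ} {m : ℕ} {A : Finset (List Bool)} (h : [] ∈ A) :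
    W b (m+1) A =
      symWeight (fun _ => b) A [] * W b m (child false A) * W b m (child true A) := by
  unfold W
  rw [filter_decomp h, Finset.prod_insert, Finset.prod_union]
  · rw [Finset.prod_image (by intro x _ y _ hxy; simpa using hxy),
      Finset.prod_image (by intro x _ y _ hxy; simpa using hxy)]
    rw [mul_assoc]
    congr 1
    congr 1
    · exact Finset.prod_congr rfl (fun σ _ => symWeight_child)
    · exact Finset.prod_congr rfl (fun σ _ => symWeight_child)
  · -- disjointness of the two images
    rw [Finset.disjoint_left]
    rintro τ hτ hτ'
    simp only [Finset.mem_image] at hτ hτ'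
    obtain ⟨σ, -, rfl⟩ := hτ
    obtain ⟨σ', -, h'⟩ := hτ'
    simp at h'
  · -- [] not in the union of images
    simp only [Finset.mem_union, Finset.mem_image]
    rintro (⟨σ, -, h'⟩ | ⟨σ, -, h'⟩) <;> simp at h'

/-- The hitting predicate: `A` contains a string of length `n+1` ending in `false`. -/
def hitP (n : ℕ) (A : Finset (List Bool)) : Prop :=
  ∃ σ ∈ A, σ.length = n + 1 ∧ σ.getLast? = some false

lemma hitP_empty {n : ℕ} : ¬ hitP n (∅ : Finset (List Bool)) := by
  rintro ⟨σ, hσ, -⟩; simp at hσ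

lemma hitP_zero {A : Finset (List Bool)} : hitP 0 A ↔ [false] ∈ A := by
  constructor
  · rintro ⟨σ, hσ, h1, h2⟩
    match σ, h1 with
    | [x], _ =>
      simp only [List.getLast?_singleton, Option.some.injEq] at h2
      subst h2; exact hσ
  · intro h; exact ⟨[false], h, rfl, rfl⟩

lemma hitP_succ {n : ℕ} {A : Finset (List Bool)} :
    hitP (n+1) A ↔ hitP n (child false A) ∨ hitP n (child true A) := by
  constructor
  · rintro ⟨σ, hσ, h1, h2⟩
    match σ, h1 with
    | c :: σ', h1 =>
      have hne : σ' ≠ [] := by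
        intro h'; subst h'; simp at h1
      have hlast : σ'.getLast? = some false := by
        rw [List.getLast?_cons] at h2
        obtain ⟨x, hx⟩ := Option.isSome_iff_exists.1 (List.getLast?_isSome.2 hne)
        rw [hx] at h2 ⊢
        simpa using h2
      have hσ' : σ' ∈ child c A := mem_child.2 hσ
      have hlen : σ'.length = n + 1 := by simpa using h1
      cases c
      · exact Or.inl ⟨σ', hσ', hlen, hlast⟩
      · exact Or.inr ⟨σ', hσ', hlen, hlast⟩
  · rintro (⟨σ, hσ, h1, h2⟩ | ⟨σ, hσ, h1, h2⟩)
    · refine ⟨false :: σ, mem_child.1 hσ, by simp [h1], ?_⟩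
      rw [List.getLast?_cons, h2]; rfl
    · refine ⟨true :: σ, mem_child.1 hσ, by simp [h1], ?_⟩
      rw [List.getLast?_cons, h2]; rfl

end Aux3
section Aux4

open scoped Classical

lemma symWeight_nil_both {b : ℝ} {A : Finset (List Bool)} (h0 : [false] ∈ A) (h1 : [true] ∈ A) :
    symWeight (fun _ => b) A [] = 1 - 2 * b := by
  simp [symWeight, h0, h1]

lemma symWeight_nil_single {b : ℝ} {A : Finset (List Bool)} (h : ¬([false] ∈ A ∧ [true] ∈ A)) :
    symWeight (fun _ => b) A [] = b := by
  simp only [symWeight, List.nil_append, if_neg h]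

lemma nil_mem_of_mem_Trees {m : ℕ} {A : Finset (List Bool)} (h : A ∈ Trees m) : [] ∈ A :=
  nil_mem_of_tree (mem_Trees.1 h)

/-- Sum over trees with both children of the root present. -/
lemma sum_case_both (b : ℝ) (m : ℕ) (P : Finset (List Bool) → Prop) :
    ∑ A ∈ (Trees (m+1)).filter (fun A => [false] ∈ A ∧ [true] ∈ A ∧ P A), W b (m+1) A
      = (1 - 2*b) *
        ∑ p ∈ ((Trees m) ×ˢ (Trees m)).filter (fun p => P (consTree p.1 p.2)),
          W b m p.1 * W b m p.2 := by
  rw [Finset.mul_sum]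
  refine Finset.sum_nbij' (fun A => (child false A, child true A))
    (fun p => consTree p.1 p.2) ?_ ?_ ?_ ?_ ?_
  · rintro A hA
    simp only [Finset.mem_filter] at hA ⊢
    obtain ⟨hA, hf, ht, hP⟩ := hA
    have hT := mem_Trees.1 hA
    refine ⟨Finset.mem_product.2 ⟨mem_Trees.2 (child_tree hT hf), mem_Trees.2 (child_tree hT ht)⟩, ?_⟩
    rwa [consTree_child (nil_mem_of_tree hT)]
  · rintro ⟨B₀, B₁⟩ hp
    simp only [Finset.mem_filter, Finset.mem_product] at hp ⊢
    obtain ⟨⟨h₀, h₁⟩, hP⟩ := hp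
    have hT₀ := mem_Trees.1 h₀
    have hT₁ := mem_Trees.1 h₁
    refine ⟨mem_Trees.2 (consTree_tree (Or.inr hT₀) (Or.inr hT₁) ?_), ?_, ?_, hP⟩
    · rintro ⟨rfl, -⟩; exact absurd hT₀.1 (by simp)
    · exact mem_consTree.2 (Or.inr (Or.inl ⟨[], nil_mem_of_tree hT₀, rfl⟩))
    · exact mem_consTree.2 (Or.inr (Or.inr ⟨[], nil_mem_of_tree hT₁, rfl⟩))
  · intro A hA
    simp only [Finset.mem_filter] at hA
    exact consTree_child (nil_mem_of_tree (mem_Trees.1 hA.1))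
  · rintro ⟨B₀, B₁⟩ -
    simp [child_consTree_false, child_consTree_true]
  · intro A hA
    simp only [Finset.mem_filter] at hA
    obtain ⟨hA, hf, ht, -⟩ := hA
    rw [W_decomp (nil_mem_of_mem_Trees hA), symWeight_nil_both hf ht, mul_assoc]

/-- Sum over trees with only the `false` child of the root present. -/
lemma sum_case_false (b : ℝ) (m : ℕ) (P : Finset (List Bool) → Prop) :
    ∑ A ∈ (Trees (m+1)).filter (fun A => [false] ∈ A ∧ [true] ∉ A ∧ P A), W b (m+1) A
      = b * ∑ B ∈ (Trees m).filter (fun B => P (consTree B ∅)), W b m B := by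
  rw [Finset.mul_sum]
  refine Finset.sum_nbij' (fun A => child false A) (fun B => consTree B ∅) ?_ ?_ ?_ ?_ ?_
  · rintro A hA
    simp only [Finset.mem_filter] at hA ⊢
    obtain ⟨hA, hf, ht, hP⟩ := hA
    have hT := mem_Trees.1 hA
    refine ⟨mem_Trees.2 (child_tree hT hf), ?_⟩
    have he : child true A = ∅ := child_eq_empty hT ht
    rwa [← he, consTree_child (nil_mem_of_tree hT)]
  · rintro B hB
    simp only [Finset.mem_filter] at hB ⊢
    obtain ⟨hB, hP⟩ := hB
    have hT := mem_Trees.1 hB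
    refine ⟨mem_Trees.2 (consTree_tree (Or.inr hT) (Or.inl rfl) ?_), ?_, ?_, hP⟩
    · rintro ⟨rfl, -⟩; exact absurd hT.1 (by simp)
    · exact mem_consTree.2 (Or.inr (Or.inl ⟨[], nil_mem_of_tree hT, rfl⟩))
    · intro hmem
      rcases mem_consTree.1 hmem with h | ⟨σ, -, h⟩ | ⟨σ, hσ, h⟩ <;> simp_all
  · intro A hA
    simp only [Finset.mem_filter] at hA
    obtain ⟨hA, hf, ht, -⟩ := hA
    have hT := mem_Trees.1 hA
    rw [← child_eq_empty hT ht]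
    exact consTree_child (nil_mem_of_tree hT)
  · intro B hB
    exact child_consTree_false
  · intro A hA
    simp only [Finset.mem_filter] at hA
    obtain ⟨hA, hf, ht, -⟩ := hA
    have hT := mem_Trees.1 hA
    rw [W_decomp (nil_mem_of_tree hT), symWeight_nil_single (by tauto),
      child_eq_empty hT ht, W_empty, mul_one]

/-- Sum over trees with only the `true` child of the root present. -/
lemma sum_case_true (b : ℝ) (m : ℕ) (P : Finset (List Bool) → Prop) :
    ∑ A ∈ (Trees (m+1)).filter (fun A => [false] ∉ A ∧ [true] ∈ A ∧ P A), W b (m+1) A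
      = b * ∑ B ∈ (Trees m).filter (fun B => P (consTree ∅ B)), W b m B := by
  rw [Finset.mul_sum]
  refine Finset.sum_nbij' (fun A => child true A) (fun B => consTree ∅ B) ?_ ?_ ?_ ?_ ?_
  · rintro A hA
    simp only [Finset.mem_filter] at hA ⊢
    obtain ⟨hA, hf, ht, hP⟩ := hA
    have hT := mem_Trees.1 hA
    refine ⟨mem_Trees.2 (child_tree hT ht), ?_⟩
    have he : child false A = ∅ := child_eq_empty hT hf
    rwa [← he, consTree_child (nil_mem_of_tree hT)]
  · rintro B hB
    simp only [Finset.mem_filter] at hB ⊢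
    obtain ⟨hB, hP⟩ := hB
    have hT := mem_Trees.1 hB
    refine ⟨mem_Trees.2 (consTree_tree (Or.inl rfl) (Or.inr hT) ?_), ?_, ?_, hP⟩
    · rintro ⟨-, rfl⟩; exact absurd hT.1 (by simp)
    · intro hmem
      rcases mem_consTree.1 hmem with h | ⟨σ, hσ, h⟩ | ⟨σ, -, h⟩ <;> simp_all
    · exact mem_consTree.2 (Or.inr (Or.inr ⟨[], nil_mem_of_tree hT, rfl⟩))
  · intro A hA
    simp only [Finset.mem_filter] at hA
    obtain ⟨hA, hf, ht, -⟩ := hA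
    have hT := mem_Trees.1 hA
    rw [← child_eq_empty hT hf]
    exact consTree_child (nil_mem_of_tree hT)
  · intro B hB
    exact child_consTree_true
  · intro A hA
    simp only [Finset.mem_filter] at hA
    obtain ⟨hA, hf, ht, -⟩ := hA
    have hT := mem_Trees.1 hA
    rw [W_decomp (nil_mem_of_tree hT), symWeight_nil_single (by tauto),
      child_eq_empty hT hf, W_empty, mul_one]

lemma root_child_mem {m : ℕ} {A : Finset (List Bool)} (h : A ∈ Trees (m+1)) :
    [false] ∈ A ∨ [true] ∈ A := by
  have hT := mem_Trees.1 h
  have := hT.2.2.2 [] (nil_mem_of_tree hT) (by simp)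
  simpa using this

/-- Split a sum over trees of height `m+1` according to the root's children. -/
lemma sum_split (b : ℝ) (m : ℕ) (P : Finset (List Bool) → Prop) :
    ∑ A ∈ (Trees (m+1)).filter P, W b (m+1) A
      = (∑ A ∈ (Trees (m+1)).filter (fun A => [false] ∈ A ∧ [true] ∈ A ∧ P A), W b (m+1) A)
      + (∑ A ∈ (Trees (m+1)).filter (fun A => [false] ∈ A ∧ [true] ∉ A ∧ P A), W b (m+1) A)
      + (∑ A ∈ (Trees (m+1)).filter (fun A => [false] ∉ A ∧ [true] ∈ A ∧ P A), W b (m+1) A) := by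
  have h1 : (Trees (m+1)).filter P =
      ((Trees (m+1)).filter (fun A => [false] ∈ A ∧ [true] ∈ A ∧ P A)) ∪
      (((Trees (m+1)).filter (fun A => [false] ∈ A ∧ [true] ∉ A ∧ P A)) ∪
       ((Trees (m+1)).filter (fun A => [false] ∉ A ∧ [true] ∈ A ∧ P A))) := by
    ext A
    simp only [Finset.mem_filter, Finset.mem_union]
    constructor
    · rintro ⟨hA, hP⟩
      rcases root_child_mem hA with hf | ht
      · by_cases h' : [true] ∈ A
        · exact Or.inl ⟨hA, hf, h', hP⟩
        · exact Or.inr (Or.inl ⟨hA, hf, h', hP⟩)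
      · by_cases h' : [false] ∈ A
        · exact Or.inl ⟨hA, h', ht, hP⟩
        · exact Or.inr (Or.inr ⟨hA, h', ht, hP⟩)
    · rintro (⟨hA, -, -, hP⟩ | ⟨hA, -, -, hP⟩ | ⟨hA, -, -, hP⟩) <;> exact ⟨hA, hP⟩
  rw [h1, Finset.sum_union, Finset.sum_union, add_assoc]
  · rw [Finset.disjoint_left]
    intro A hA hA'
    simp only [Finset.mem_filter] at hA hA'
    tauto
  · rw [Finset.disjoint_left]
    intro A hA hA'
    simp only [Finset.mem_filter, Finset.mem_union] at hA hA'
    tauto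

end Aux4
section Aux5

open scoped Classical

noncomputable def tF (b : ℝ) (n : ℕ) : ℝ :=
  ∑ A ∈ (Trees (n+1)).filter (fun A => hitP n A), W b (n+1) A

noncomputable def gF (b : ℝ) (m : ℕ) : ℝ := ∑ A ∈ Trees m, W b m A

lemma false_mem_consTree {B₀ B₁ : Finset (List Bool)} :
    [false] ∈ consTree B₀ B₁ ↔ [] ∈ B₀ := by
  rw [mem_consTree]
  constructor
  · rintro (h | ⟨σ, hσ, h⟩ | ⟨σ, hσ, h⟩) <;> simp_all
  · intro h; exact Or.inr (Or.inl ⟨[], h, rfl⟩)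

lemma true_mem_consTree {B₀ B₁ : Finset (List Bool)} :
    [true] ∈ consTree B₀ B₁ ↔ [] ∈ B₁ := by
  rw [mem_consTree]
  constructor
  · rintro (h | ⟨σ, hσ, h⟩ | ⟨σ, hσ, h⟩) <;> simp_all
  · intro h; exact Or.inr (Or.inr ⟨[], h, rfl⟩)

lemma Trees_zero : Trees 0 = {({[]} : Finset (List Bool))} := by
  ext A
  rw [mem_Trees, Finset.mem_singleton]
  constructor
  · intro h
    ext σ
    simp only [Finset.mem_singleton]
    constructor
    · intro hσ
      have := h.2.1 σ hσ
      exact List.length_eq_zero_iff.1 (Nat.le_zero.1 this)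
    · rintro rfl
      exact nil_mem_of_tree h
  · rintro rfl
    refine ⟨⟨[], by simp⟩, ?_, ?_, ?_⟩
    · intro σ hσ; simp at hσ; simp [hσ]
    · intro σ τ hst hτ
      simp only [Finset.mem_singleton] at *
      subst hτ
      exact List.prefix_nil.1 hst
    · intro σ hσ h; omega

lemma gF_zero (b : ℝ) : gF b 0 = 1 := by
  simp [gF, Trees_zero, W]

lemma prod_sum_mul {A B : Finset (Finset (List Bool))} {f g : Finset (List Bool) → ℝ} :
    ∑ x ∈ A ×ˢ B, f x.1 * g x.2 = (∑ a ∈ A, f a) * (∑ a ∈ B, g a) := by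
  rw [Finset.sum_mul_sum, Finset.sum_product]

lemma filter_product_fst {S T : Finset (Finset (List Bool))} {p : Finset (List Bool) → Prop} :
    (S ×ˢ T).filter (fun x => p x.1) = (S.filter p) ×ˢ T := by
  ext ⟨a, c⟩
  simp only [Finset.mem_filter, Finset.mem_product]
  tauto

lemma filter_product_snd {S T : Finset (Finset (List Bool))} {q : Finset (List Bool) → Prop} :
    (S ×ˢ T).filter (fun x => q x.2) = S ×ˢ (T.filter q) := by
  ext ⟨a, c⟩
  simp only [Finset.mem_filter, Finset.mem_product]
  tauto

lemma sum_product_or {S : Finset (Finset (List Bool))} {p q : Finset (List Bool) → Prop}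
    {f g : Finset (List Bool) → ℝ} :
    ∑ x ∈ (S ×ˢ S).filter (fun x => p x.1 ∨ q x.2), f x.1 * g x.2
      = (∑ a ∈ S.filter p, f a) * (∑ a ∈ S, g a)
        + (∑ a ∈ S, f a) * (∑ a ∈ S.filter q, g a)
        - (∑ a ∈ S.filter p, f a) * (∑ a ∈ S.filter q, g a) := by
  have key := Finset.sum_union_inter (s₁ := (S ×ˢ S).filter (fun x => p x.1))
    (s₂ := (S ×ˢ S).filter (fun x => q x.2)) (f := fun x => f x.1 * g x.2)
  rw [← Finset.filter_or, ← Finset.filter_and] at key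
  have h1 : ∑ x ∈ (S ×ˢ S).filter (fun x => p x.1), f x.1 * g x.2
      = (∑ a ∈ S.filter p, f a) * (∑ a ∈ S, g a) := by
    rw [filter_product_fst, prod_sum_mul]
  have h2 : ∑ x ∈ (S ×ˢ S).filter (fun x => q x.2), f x.1 * g x.2
      = (∑ a ∈ S, f a) * (∑ a ∈ S.filter q, g a) := by
    rw [filter_product_snd, prod_sum_mul]
  have h3 : ∑ x ∈ (S ×ˢ S).filter (fun x => p x.1 ∧ q x.2), f x.1 * g x.2
      = (∑ a ∈ S.filter p, f a) * (∑ a ∈ S.filter q, g a) := by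
    have : (S ×ˢ S).filter (fun x => p x.1 ∧ q x.2) = (S.filter p) ×ˢ (S.filter q) := by
      ext ⟨a, c⟩
      simp only [Finset.mem_filter, Finset.mem_product]
      tauto
    rw [this, prod_sum_mul]
  rw [h1, h2, h3] at key
  linarith

lemma tF_zero (b : ℝ) : tF b 0 = 1 - b := by
  unfold tF
  rw [sum_split b 0 (fun A => hitP 0 A)]
  have hboth : ∑ A ∈ (Trees 1).filter (fun A => [false] ∈ A ∧ [true] ∈ A ∧ hitP 0 A), W b 1 A
      = (1 - 2*b) * 1 := by
    rw [sum_case_both b 0 (fun A => hitP 0 A)]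
    congr 1
    have : ((Trees 0) ×ˢ (Trees 0)).filter (fun p => hitP 0 (consTree p.1 p.2))
        = (Trees 0) ×ˢ (Trees 0) := by
      apply Finset.filter_true_of_mem
      rintro ⟨B₀, B₁⟩ hp
      rw [Finset.mem_product] at hp
      rw [hitP_zero, false_mem_consTree]
      exact nil_mem_of_mem_Trees hp.1
    rw [this, prod_sum_mul]
    have := gF_zero b
    unfold gF at this
    rw [this, mul_one]
  have hfalse : ∑ A ∈ (Trees 1).filter (fun A => [false] ∈ A ∧ [true] ∉ A ∧ hitP 0 A), W b 1 A
      = b * 1 := by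
    rw [sum_case_false b 0 (fun A => hitP 0 A)]
    congr 1
    have : (Trees 0).filter (fun B => hitP 0 (consTree B ∅)) = Trees 0 := by
      apply Finset.filter_true_of_mem
      intro B hB
      rw [hitP_zero, false_mem_consTree]
      exact nil_mem_of_mem_Trees hB
    rw [this]
    have := gF_zero b
    unfold gF at this
    rw [this]
  have htrue : ∑ A ∈ (Trees 1).filter (fun A => [false] ∉ A ∧ [true] ∈ A ∧ hitP 0 A), W b 1 A
      = 0 := by
    rw [sum_case_true b 0 (fun A => hitP 0 A)]
    have : (Trees 0).filter (fun B => hitP 0 (consTree ∅ B)) = ∅ := by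
      apply Finset.filter_false_of_mem
      intro B hB
      rw [hitP_zero, false_mem_consTree]
      simp
    rw [this]
    simp
  rw [hboth, hfalse, htrue]
  ring

lemma tF_succ (b : ℝ) (n : ℕ) (hg : gF b (n+1) = 1) :
    tF b (n+1) = (2 - 2*b) * tF b n - (1 - 2*b) * (tF b n)^2 := by
  unfold tF
  rw [sum_split b (n+1) (fun A => hitP (n+1) A)]
  have hfalse : ∑ A ∈ (Trees (n+2)).filter (fun A => [false] ∈ A ∧ [true] ∉ A ∧ hitP (n+1) A),
      W b (n+2) A = b * tF b n := by
    rw [sum_case_false b (n+1) (fun A => hitP (n+1) A)]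
    congr 1
    apply Finset.sum_congr _ (fun _ _ => rfl)
    apply Finset.filter_congr
    intro B hB
    rw [hitP_succ, child_consTree_false, child_consTree_true]
    simp [hitP_empty]
  have htrue : ∑ A ∈ (Trees (n+2)).filter (fun A => [false] ∉ A ∧ [true] ∈ A ∧ hitP (n+1) A),
      W b (n+2) A = b * tF b n := by
    rw [sum_case_true b (n+1) (fun A => hitP (n+1) A)]
    congr 1
    apply Finset.sum_congr _ (fun _ _ => rfl)
    apply Finset.filter_congr
    intro B hB
    rw [hitP_succ, child_consTree_false, child_consTree_true]
    simp [hitP_empty]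
  have hboth : ∑ A ∈ (Trees (n+2)).filter (fun A => [false] ∈ A ∧ [true] ∈ A ∧ hitP (n+1) A),
      W b (n+2) A
      = (1 - 2*b) * (tF b n * 1 + 1 * tF b n - tF b n * tF b n) := by
    rw [sum_case_both b (n+1) (fun A => hitP (n+1) A)]
    congr 1
    have heq : ((Trees (n+1)) ×ˢ (Trees (n+1))).filter
          (fun p => hitP (n+1) (consTree p.1 p.2))
        = ((Trees (n+1)) ×ˢ (Trees (n+1))).filter (fun p => hitP n p.1 ∨ hitP n p.2) := by
      apply Finset.filter_congr
      rintro ⟨B₀, B₁⟩ -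
      rw [hitP_succ, child_consTree_false, child_consTree_true]
    rw [heq, sum_product_or]
    unfold gF at hg
    rw [hg]
    rfl
  rw [hboth, hfalse, htrue]
  unfold tF
  ring

end Aux5
section Aux6

open scoped Classical

instance : BorelSpace CC := ⟨rfl⟩

lemma isOpen_cyl (σ : List Bool) : IsOpen (cyl σ) := by
  have h : cyl σ = ⋂ i : Fin σ.length, {x : Cantor | x i = σ.get i} := by
    ext x; simp [cyl, Set.mem_iInter]
  rw [h]
  refine isOpen_iInter_of_finite fun i => ?_
  have h2 : {x : Cantor | x i = σ.get i} = (fun x : Cantor => x (i : ℕ)) ⁻¹' {σ.get i} := by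
    ext x; simp
  rw [h2]
  exact (isOpen_discrete _).preimage (continuous_apply (i : ℕ))

lemma measurableSet_hit {U : Set Cantor} (hU : IsOpen U) :
    MeasurableSet {K : CC | (K.1 ∩ U).Nonempty} := by
  have : IsOpen {K : CC | (K.1 ∩ U).Nonempty} :=
    TopologicalSpace.isOpen_generateFrom_of_mem (Or.inl ⟨U, hU, rfl⟩)
  exact this.measurableSet

lemma cyl_nil : cyl [] = Set.univ := by
  ext x
  constructor
  · intro _; trivial
  · intro _ i
    exact absurd i.2 (by simp)

lemma cyl_mono {σ τ : List Bool} (h : σ <+: τ) : cyl τ ⊆ cyl σ := by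
  obtain ⟨u, rfl⟩ := h
  intro x hx i
  have := hx ⟨(i : ℕ), by simp; omega⟩
  simp only [List.get_eq_getElem] at this ⊢
  rwa [List.getElem_append_left i.2] at this

lemma mem_cyl_append {σ : List Bool} {c : Bool} {x : Cantor} :
    x ∈ cyl (σ ++ [c]) ↔ x ∈ cyl σ ∧ x σ.length = c := by
  constructor
  · intro h
    refine ⟨cyl_mono ⟨[c], rfl⟩ h, ?_⟩
    have := h ⟨σ.length, by simp⟩
    simp only [List.get_eq_getElem] at this
    rw [List.getElem_append_right (by omega)] at this
    simpa using this
  · rintro ⟨h1, h2⟩ i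
    rcases Nat.lt_or_ge (i : ℕ) σ.length with hi | hi
    · simp only [List.get_eq_getElem]
      rw [List.getElem_append_left hi]
      exact h1 ⟨(i : ℕ), hi⟩
    · have hi' : (i : ℕ) = σ.length := by have := i.2; simp at this; omega
      simp only [List.get_eq_getElem]
      rw [List.getElem_append_right (by omega)]
      simp [hi', h2]

/-- The truncated tree of a closed set. -/
noncomputable def treeOf (m : ℕ) (K : CC) : Finset (List Bool) :=
  (Strs m).filter (fun σ => (K.1 ∩ cyl σ).Nonempty)

lemma mem_treeOf {m : ℕ} {K : CC} {σ : List Bool} :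
    σ ∈ treeOf m K ↔ σ.length ≤ m ∧ (K.1 ∩ cyl σ).Nonempty := by
  simp [treeOf, mem_Strs]

lemma treeOf_mem_Trees (m : ℕ) (K : CC) : treeOf m K ∈ Trees m := by
  rw [mem_Trees]
  refine ⟨⟨[], ?_⟩, ?_, ?_, ?_⟩
  · rw [mem_treeOf, cyl_nil]
    exact ⟨by simp, by simpa using K.2.1⟩
  · intro σ hσ
    exact (mem_treeOf.1 hσ).1
  · intro σ τ hst hτ
    rw [mem_treeOf] at *
    obtain ⟨hlen, x, hx1, hx2⟩ := hτ
    exact ⟨le_trans hst.length_le hlen, x, hx1, cyl_mono hst hx2⟩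
  · intro σ hσ hlen
    rw [mem_treeOf] at hσ
    obtain ⟨-, x, hx1, hx2⟩ := hσ
    cases hc : x σ.length
    · refine Or.inl (mem_treeOf.2 ⟨by simp only [List.length_append, List.length_cons, List.length_nil]; omega, x, hx1, ?_⟩)
      exact mem_cyl_append.2 ⟨hx2, hc⟩
    · refine Or.inr (mem_treeOf.2 ⟨by simp only [List.length_append, List.length_cons, List.length_nil]; omega, x, hx1, ?_⟩)
      exact mem_cyl_append.2 ⟨hx2, hc⟩

lemma mem_UA_iff {m : ℕ} {A : Finset (List Bool)} {K : CC}
    (hA : ∀ σ ∈ A, σ.length ≤ m) : K ∈ UA m A ↔ A = treeOf m K := by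
  constructor
  · intro h
    ext σ
    rw [mem_treeOf]
    constructor
    · intro hσ
      exact ⟨hA σ hσ, (h σ (hA σ hσ)).1 hσ⟩
    · rintro ⟨h1, h2⟩
      exact (h σ h1).2 h2
  · rintro rfl σ hlen
    rw [mem_treeOf]
    constructor
    · rintro ⟨-, h⟩; exact h
    · intro h; exact ⟨hlen, h⟩

lemma measurableSet_UA (m : ℕ) (A : Finset (List Bool)) : MeasurableSet (UA m A) := by
  have h : UA m A = ⋂ σ ∈ (↑(Strs m) : Set (List Bool)),
      {K : CC | σ ∈ A ↔ (K.1 ∩ cyl σ).Nonempty} := by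
    ext K
    simp only [UA, Set.mem_setOf_eq, Set.mem_iInter, Finset.mem_coe]
    constructor
    · intro hK σ hσ; exact hK σ (mem_Strs.1 hσ)
    · intro hK σ hσ; exact hK σ (mem_Strs.2 hσ)
  rw [h]
  refine MeasurableSet.biInter (Set.Countable.mono (Set.subset_univ _) (Set.countable_univ)) ?_
  intro σ _
  by_cases hσ : σ ∈ A
  · have : {K : CC | σ ∈ A ↔ (K.1 ∩ cyl σ).Nonempty} = {K : CC | (K.1 ∩ cyl σ).Nonempty} := by
      ext K; simp [hσ]
    rw [this]
    exact measurableSet_hit (isOpen_cyl σ)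
  · have : {K : CC | σ ∈ A ↔ (K.1 ∩ cyl σ).Nonempty} = {K : CC | (K.1 ∩ cyl σ).Nonempty}ᶜ := by
      ext K; simp [hσ]
    rw [this]
    exact (measurableSet_hit (isOpen_cyl σ)).compl

lemma UA_pairwise_disjoint (m : ℕ) (S : Finset (Finset (List Bool))) (hS : S ⊆ Trees m) :
    (↑S : Set (Finset (List Bool))).PairwiseDisjoint (fun A => UA m A) := by
  intro A hA B hB hAB
  rw [Function.onFun]
  rw [Set.disjoint_left]
  intro K hKA hKB
  have h1 := (mem_UA_iff (fun σ hσ => (mem_Trees.1 (hS hA)).2.1 σ hσ)).1 hKA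
  have h2 := (mem_UA_iff (fun σ hσ => (mem_Trees.1 (hS hB)).2.1 σ hσ)).1 hKB
  exact hAB (h1.trans h2.symm)

lemma measure_sum_UA {b : ℝ} {μ : Measure CC} (hμ : IsSymBranching (fun _ => b) μ)
    (m : ℕ) (S : Finset (Finset (List Bool))) (hS : S ⊆ Trees m) :
    (μ {K : CC | treeOf m K ∈ S}).toReal = ∑ A ∈ S, W b m A := by
  have hset : {K : CC | treeOf m K ∈ S} = ⋃ A ∈ S, UA m A := by
    ext K
    simp only [Set.mem_setOf_eq, Set.mem_iUnion, exists_prop]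
    constructor
    · intro h
      exact ⟨treeOf m K, h, (mem_UA_iff (fun σ hσ => (mem_treeOf.1 hσ).1)).2 rfl⟩
    · rintro ⟨A, hA, hK⟩
      have := (mem_UA_iff (fun σ hσ => (mem_Trees.1 (hS hA)).2.1 σ hσ)).1 hK
      rwa [← this]
  haveI := hμ.1
  rw [hset, measure_biUnion_finset (UA_pairwise_disjoint m S hS)
    (fun A _ => measurableSet_UA m A)]
  rw [ENNReal.toReal_sum (fun A _ => measure_ne_top μ _)]
  exact Finset.sum_congr rfl (fun A hA => hμ.2 m A (mem_Trees.1 (hS hA)))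

lemma gF_eq_one {b : ℝ} {μ : Measure CC} (hμ : IsSymBranching (fun _ => b) μ) (m : ℕ) :
    gF b m = 1 := by
  have h := measure_sum_UA hμ m (Trees m) (le_refl _)
  have huniv : {K : CC | treeOf m K ∈ Trees m} = Set.univ := by
    ext K
    simp [treeOf_mem_Trees]
  rw [huniv] at h
  haveI := hμ.1
  rw [measure_univ] at h
  simp only [ENNReal.toReal_one] at h
  rw [gF]
  exact h.symm

lemma hit_iff_hitP {n : ℕ} {K : CC} :
    (K.1 ∩ {x : Cantor | x n = false}).Nonempty ↔ hitP n (treeOf (n+1) K) := by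
  constructor
  · rintro ⟨x, hx1, hx2⟩
    simp only [Set.mem_setOf_eq] at hx2
    set σ : List Bool := List.ofFn (fun i : Fin (n+1) => x i) with hσ
    have hlen : σ.length = n + 1 := by simp [hσ]
    have hmem : x ∈ cyl σ := by
      intro i
      simp only [List.get_eq_getElem, hσ, List.getElem_ofFn]
    refine ⟨σ, mem_treeOf.2 ⟨by omega, x, hx1, hmem⟩, hlen, ?_⟩
    have h1 : σ[n]'(by omega) = x n := by
      simp only [hσ, List.getElem_ofFn]
    rw [List.getLast?_eq_getElem?, hlen, Nat.add_sub_cancel,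
      List.getElem?_eq_getElem (by omega), h1, hx2]
  · rintro ⟨σ, hσ, hlen, hlast⟩
    obtain ⟨-, y, hy1, hy2⟩ := mem_treeOf.1 hσ
    refine ⟨y, hy1, ?_⟩
    have hn : σ[n]'(by omega) = false := by
      rw [List.getLast?_eq_getElem?, hlen] at hlast
      simp only [Nat.add_sub_cancel] at hlast
      rw [List.getElem?_eq_getElem (by omega)] at hlast
      simpa using hlast
    have := hy2 ⟨n, by omega⟩
    simp only [List.get_eq_getElem] at this
    simp only [Set.mem_setOf_eq]
    rw [this, hn]

lemma cap_eq_tF {b : ℝ} {μ : Measure CC} (hμ : IsSymBranching (fun _ => b) μ) (n : ℕ) :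
    cap μ {x : Cantor | x n = false} = tF b n := by
  have h := measure_sum_UA hμ (n+1) ((Trees (n+1)).filter (fun A => hitP n A))
    (Finset.filter_subset _ _)
  have hset : {K : CC | treeOf (n+1) K ∈ (Trees (n+1)).filter (fun A => hitP n A)}
      = {K : CC | (K.1 ∩ {x : Cantor | x n = false}).Nonempty} := by
    ext K
    simp only [Set.mem_setOf_eq, Finset.mem_filter]
    rw [hit_iff_hitP]
    have := treeOf_mem_Trees (n+1) K
    tauto
  rw [hset] at h
  rw [cap, h, tF]

end Aux6

/-- for the symmetric branching measure with constant parameter `0 < b < 1/2`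
and `X_n = {x : x(n) = 0}`, one has `T(X₀) = 1 − b`, the recursion
`T(X_{n+1}) = (2 − 2b)T(X_n) − (1 − 2b)T(X_n)²`, and `T(X_n) → 1`. -/
theorem stmt_15 (b : ℝ) (hb0 : 0 < b) (hb : b < 1 / 2)
    (μ : Measure CC) (hμ : IsSymBranching (fun _ => b) μ) :
    cap μ {x : Cantor | x 0 = false} = 1 - b ∧
    (∀ n : ℕ, cap μ {x : Cantor | x (n + 1) = false} =
      (2 - 2 * b) * cap μ {x : Cantor | x n = false} -
        (1 - 2 * b) * (cap μ {x : Cantor | x n = false}) ^ 2) ∧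
    Tendsto (fun n : ℕ => cap μ {x : Cantor | x n = false}) atTop (𝓝 1) := by
  classical
  have key : ∀ n : ℕ, cap μ {x : Cantor | x n = false} = tF b n := fun n => cap_eq_tF hμ n
  have h0 : tF b 0 = 1 - b := tF_zero b
  have hrec : ∀ n : ℕ, tF b (n+1) = (2 - 2*b) * tF b n - (1 - 2*b) * (tF b n)^2 :=
    fun n => tF_succ b n (gF_eq_one hμ (n+1))
  have hb1 : ∀ n : ℕ, 1 - b ≤ tF b n ∧ tF b n ≤ 1 := by
    intro n
    induction n with
    | zero => rw [h0]; constructor <;> linarith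
    | succ n ih =>
      obtain ⟨h1, h2⟩ := ih
      have hfe : 1 - tF b (n+1) = (1 - tF b n) * (1 - (1-2*b) * tF b n) := by
        rw [hrec n]; ring
      have hf1 : 0 ≤ 1 - (1-2*b) * tF b n := by
        nlinarith [mul_le_mul_of_nonneg_left h2 (by linarith : (0:ℝ) ≤ 1-2*b)]
      have hf3 : 1 - (1-2*b) * tF b n ≤ 1 := by
        nlinarith [mul_nonneg (by linarith : (0:ℝ) ≤ 1-2*b) (by linarith : (0:ℝ) ≤ tF b n)]
      constructor
      · have hle : 1 - tF b (n+1) ≤ b := by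
          rw [hfe]
          calc (1 - tF b n) * (1 - (1-2*b) * tF b n) ≤ (1 - tF b n) * 1 :=
                mul_le_mul_of_nonneg_left hf3 (by linarith)
            _ = 1 - tF b n := mul_one _
            _ ≤ b := by linarith
        linarith
      · have hge : 0 ≤ 1 - tF b (n+1) := by
          rw [hfe]; exact mul_nonneg (by linarith) hf1
        linarith
  set c : ℝ := 1 - (1-2*b) * (1-b) with hc
  have hc0 : 0 ≤ c := by nlinarith
  have hc1 : c < 1 := by nlinarith [mul_pos (by linarith : (0:ℝ) < 1-2*b) (by linarith : (0:ℝ) < 1-b)]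
  have hbound : ∀ n : ℕ, 1 - tF b n ≤ b * c^n := by
    intro n
    induction n with
    | zero => rw [h0, pow_zero, mul_one]; linarith
    | succ n ih =>
      obtain ⟨h1, h2⟩ := hb1 n
      have hfe : 1 - tF b (n+1) = (1 - tF b n) * (1 - (1-2*b) * tF b n) := by
        rw [hrec n]; ring
      have hf1 : 0 ≤ 1 - (1-2*b) * tF b n := by
        nlinarith [mul_le_mul_of_nonneg_left h2 (by linarith : (0:ℝ) ≤ 1-2*b)]
      have hf2 : 1 - (1-2*b) * tF b n ≤ c := by
        have := mul_le_mul_of_nonneg_left h1 (by linarith : (0:ℝ) ≤ 1-2*b)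
        rw [hc]; linarith
      rw [hfe, pow_succ]
      calc (1 - tF b n) * (1 - (1-2*b) * tF b n) ≤ (b * c^n) * c := by
            apply mul_le_mul ih hf2 hf1
            positivity
        _ = b * (c^n * c) := by ring
  refine ⟨by rw [key 0, h0], fun n => by rw [key (n+1), key n, hrec n], ?_⟩
  have htend : Tendsto (fun n : ℕ => 1 - tF b n) atTop (𝓝 0) := by
    apply squeeze_zero (fun n => by linarith [(hb1 n).2]) hbound
    have h := (tendsto_pow_atTop_nhds_zero_of_lt_one hc0 hc1).const_mul b
    simpa using h
  have htF : Tendsto (fun n : ℕ => tF b n) atTop (𝓝 1) := by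
    have h := htend.const_sub 1
    simp only [sub_sub_cancel, sub_zero] at h
    exact h
  have hfun : (fun n : ℕ => cap μ {x : Cantor | x n = false}) = fun n : ℕ => tF b n :=
    funext key
  rw [hfun]
  exact htF
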